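/- (Minimax step for multiclass MLOO.) Let N be a finite ε-net of Δ^k in ℓ_1 distance, and let f : N → ℝ^k be any assignment with ‖f(s)‖_∞ ≤ R for all s ∈ N. Then min over distributions a ∈ Δ^N of max over q ∈ Δ^k of E_{s∼a}⟨f(s), s − q⟩ is at most εR. In particular there exists a ∈ Δ^N with E_{s∼a}⟨f(s), s − y⟩ ≤ εR for all y ∈ ∂Δ^k. -/

import Mathlib

/-- Hölder step: `⟨f, s - q⟩ ≤ ε R` when `‖f‖_∞ ≤ R` and `‖s - q‖₁ ≤ ε`. -/
lemma stmt_10_holder {k : ℕ} {ε R : ℝ} (hR : 0 ≤ R) (fv s q : Fin k → ℝ)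
    (hfb : ∀ i, |fv i| ≤ R) (hnq : ∑ i, |s i - q i| ≤ ε) :
    ∑ i, fv i * (s i - q i) ≤ ε * R := by
  calc ∑ i, fv i * (s i - q i) ≤ ∑ i, |fv i * (s i - q i)| :=
        Finset.sum_le_sum fun i _ => le_abs_self _
    _ = ∑ i, |fv i| * |s i - q i| := by simp [abs_mul]
    _ ≤ ∑ i, R * |s i - q i| :=
        Finset.sum_le_sum fun i _ => mul_le_mul_of_nonneg_right (hfb i) (abs_nonneg _)
    _ = R * ∑ i, |s i - q i| := by rw [Finset.mul_sum]
    _ ≤ R * ε := mul_le_mul_of_nonneg_left hnq hR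
    _ = ε * R := mul_comm _ _

/-- minimax step for the multiclass MLOO: if `N` is a finite ε-net of `Δ^k`
in ℓ₁ and `‖f(s)‖_∞ ≤ R` for `s ∈ N`, then there is a distribution `a ∈ Δ^N` with
`E_{s∼a}⟨f(s), s - q⟩ ≤ εR` for every `q ∈ Δ^k` (in particular for all vertices `q = e_i`). -/
theorem stmt_10 (k : ℕ) (hk : 0 < k) (ε R : ℝ) (hε : 0 ≤ ε) (hR : 0 ≤ R)
    (N : Finset (Fin k → ℝ)) (hNsub : ↑N ⊆ stdSimplex ℝ (Fin k))
    (hnet : ∀ q ∈ stdSimplex ℝ (Fin k), ∃ s ∈ N, ∑ i, |s i - q i| ≤ ε)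
    (f : (Fin k → ℝ) → (Fin k → ℝ)) (hf : ∀ s ∈ N, ∀ i, |f s i| ≤ R) :
    ∃ a : (Fin k → ℝ) → ℝ, (∀ s, 0 ≤ a s) ∧ (∑ s ∈ N, a s = 1) ∧
      ∀ q ∈ stdSimplex ℝ (Fin k),
        ∑ s ∈ N, a s * (∑ i, f s i * (s i - q i)) ≤ ε * R := by
  classical
  -- N is nonempty
  have hNne : N.Nonempty := by
    have h1 : (fun i : Fin k => if i = ⟨0, hk⟩ then (1:ℝ) else 0) ∈ stdSimplex ℝ (Fin k) := by
      constructor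
      · intro i; dsimp only; split <;> norm_num
      · simp
    obtain ⟨s, hs, -⟩ := hnet _ h1
    exact ⟨s, hs⟩
  -- the payoff vectors
  set g : (Fin k → ℝ) → (Fin k → ℝ) :=
    fun s i => (∑ j, f s j * s j) - f s i - ε * R with hg
  -- the linear "mixture" map
  set L : (↥N → ℝ) → (Fin k → ℝ) := fun a => ∑ s : ↥N, a s • g s with hL
  have hLlin : IsLinearMap ℝ L := by
    constructor
    · intro a b; simp [hL, add_smul, Finset.sum_add_distrib]
    · intro c a; simp [hL, Finset.smul_sum, smul_smul]
  -- the mixture set C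
  set C : Set (Fin k → ℝ) := L '' (stdSimplex ℝ ↥N) with hC
  have hCconv : Convex ℝ C := (convex_stdSimplex ℝ ↥N).is_linear_image hLlin
  have hCcomp : IsCompact C := by
    refine (isCompact_stdSimplex ℝ ↥N).image ?_
    refine continuous_finset_sum _ fun s _ => ?_
    exact (continuous_apply s).smul continuous_const
  -- the nonpositive orthant K
  set K : Set (Fin k → ℝ) := {x | ∀ i, x i ≤ 0} with hK
  have hKconv : Convex ℝ K := by
    intro x hx y hy a b ha hb hab i
    have h1 : a * x i ≤ 0 := mul_nonpos_of_nonneg_of_nonpos ha (hx i)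
    have h2 : b * y i ≤ 0 := mul_nonpos_of_nonneg_of_nonpos hb (hy i)
    simpa using add_nonpos h1 h2
  have hKclosed : IsClosed K := by
    have hKeq : K = ⋂ i, {x : Fin k → ℝ | x i ≤ 0} := by
      ext x; simp [hK, Set.mem_iInter]
    rw [hKeq]
    exact isClosed_iInter fun i => isClosed_le (continuous_apply i) continuous_const
  by_cases hint : ∃ x, x ∈ C ∧ x ∈ K
  · -- found the distribution
    obtain ⟨x, ⟨a, haΔ, rfl⟩, hxK⟩ := hint
    refine ⟨fun s => if h : s ∈ N then a ⟨s, h⟩ else 0, ?_, ?_, ?_⟩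
    · intro s; dsimp only; split
      · exact haΔ.1 _
      · exact le_refl 0
    · show ∑ s ∈ N, (if h : s ∈ N then a ⟨s, h⟩ else 0) = 1
      rw [← Finset.sum_attach N (fun s => if h : s ∈ N then a ⟨s, h⟩ else 0)]
      rw [← haΔ.2, Finset.univ_eq_attach]
      exact Finset.sum_congr rfl fun x _ => by simp [x.2]
    · intro q hq
      show ∑ s ∈ N, (if h : s ∈ N then a ⟨s, h⟩ else 0) * (∑ i, f s i * (s i - q i)) ≤ ε * R
      have hrw : ∑ s ∈ N, (if h : s ∈ N then a ⟨s, h⟩ else 0) * (∑ i, f s i * (s i - q i))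
          = ∑ s : ↥N, a s * (∑ i, f (s:Fin k → ℝ) i * ((s:Fin k → ℝ) i - q i)) := by
        rw [← Finset.sum_attach N
          (fun s => (if h : s ∈ N then a ⟨s, h⟩ else 0) * (∑ i, f s i * (s i - q i)))]
        rw [Finset.univ_eq_attach]
        exact Finset.sum_congr rfl fun x _ => by simp [x.2]
      rw [hrw]
      -- key: from L a ∈ K
      have key : ∀ j, (∑ s : ↥N, a s * ((∑ i, f (s:Fin k → ℝ) i * (s:Fin k → ℝ) i) - f s j))
          ≤ ε * R := by
        intro j
        have h0 := hxK j
        have hsum : (L a) j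
            = (∑ s : ↥N, a s * ((∑ i, f (s:Fin k → ℝ) i * (s:Fin k → ℝ) i) - f s j))
              - ε * R := by
          simp only [hL, hg, Finset.sum_apply, Pi.smul_apply, smul_eq_mul]
          have hterm : ∀ s : ↥N,
              a s * ((∑ i, f (s:Fin k → ℝ) i * (s:Fin k → ℝ) i) - f s j - ε * R)
              = a s * ((∑ i, f (s:Fin k → ℝ) i * (s:Fin k → ℝ) i) - f s j) - a s * (ε * R) :=
            fun s => by ring
          rw [Finset.sum_congr rfl fun s _ => hterm s, Finset.sum_sub_distrib,
            ← Finset.sum_mul, haΔ.2, one_mul]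
        linarith [hsum ▸ h0]
      -- expand ⟨f s, s - q⟩ using ∑ q = 1
      have hexp : ∀ s : ↥N, (∑ i, f (s:Fin k → ℝ) i * ((s:Fin k → ℝ) i - q i))
          = ∑ j, q j * ((∑ i, f (s:Fin k → ℝ) i * (s:Fin k → ℝ) i) - f s j) := by
        intro s
        have h1 : ∑ i, f (s:Fin k → ℝ) i * ((s:Fin k → ℝ) i - q i)
            = (∑ i, f (s:Fin k → ℝ) i * (s:Fin k → ℝ) i) - ∑ i, q i * f (s:Fin k → ℝ) i := by
          rw [← Finset.sum_sub_distrib]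
          exact Finset.sum_congr rfl fun i _ => by ring
        have h2 : ∑ j, q j * ((∑ i, f (s:Fin k → ℝ) i * (s:Fin k → ℝ) i) - f s j)
            = (∑ i, f (s:Fin k → ℝ) i * (s:Fin k → ℝ) i) - ∑ j, q j * f (s:Fin k → ℝ) j := by
          have hterm : ∀ j, q j * ((∑ i, f (s:Fin k → ℝ) i * (s:Fin k → ℝ) i) - f s j)
              = q j * (∑ i, f (s:Fin k → ℝ) i * (s:Fin k → ℝ) i) - q j * f (s:Fin k → ℝ) j :=
            fun j => by ring
          rw [Finset.sum_congr rfl fun j _ => hterm j, Finset.sum_sub_distrib,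
            ← Finset.sum_mul, hq.2, one_mul]
        rw [h1, h2]
      calc ∑ s : ↥N, a s * (∑ i, f (s:Fin k → ℝ) i * ((s:Fin k → ℝ) i - q i))
          = ∑ j, q j * (∑ s : ↥N, a s * ((∑ i, f (s:Fin k → ℝ) i * (s:Fin k → ℝ) i) - f s j)) := by
            simp_rw [hexp, Finset.mul_sum]
            rw [Finset.sum_comm]
            exact Finset.sum_congr rfl fun s _ => Finset.sum_congr rfl fun j _ => by ring
        _ ≤ ∑ j, q j * (ε * R) :=
            Finset.sum_le_sum fun j _ => mul_le_mul_of_nonneg_left (key j) (hq.1 j)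
        _ = ε * R := by rw [← Finset.sum_mul, hq.2, one_mul]
  · -- separation and contradiction with the net property
    exfalso
    have hdisj : Disjoint C K := by
      rw [Set.disjoint_iff_inter_eq_empty]
      ext x; simp only [Set.mem_inter_iff, Set.mem_empty_iff_false, iff_false]
      intro hx; exact hint ⟨x, hx.1, hx.2⟩
    obtain ⟨φ, u, v, h1, h2, h3⟩ :=
      geometric_hahn_banach_compact_closed hCconv hCcomp hKconv hKclosed hdisj
    have hv0 : v < 0 := by
      have h00 : (0 : Fin k → ℝ) ∈ K := fun i => le_refl 0
      have := h3 0 h00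
      simpa using this
    -- φ of basis vectors is ≤ 0
    set e : Fin k → (Fin k → ℝ) := fun i j => if i = j then (1:ℝ) else 0 with he
    have hphie : ∀ i, φ (e i) ≤ 0 := by
      intro i
      by_contra h
      push_neg at h
      have ht : (0:ℝ) < -v / φ (e i) := div_pos (by linarith) h
      have hmem : (-(-v / φ (e i))) • e i ∈ K := by
        intro j
        show (-(-v / φ (e i))) • e i j ≤ 0
        simp only [he, smul_eq_mul]
        split
        · simp only [mul_one]; linarith
        · simp
      have hlt := h3 _ hmem
      rw [map_smul, smul_eq_mul, neg_div, neg_neg, div_mul_cancel₀ _ (ne_of_gt h)] at hlt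
      exact lt_irrefl _ hlt
    -- φ as a dot product
    have hphix : ∀ x : Fin k → ℝ, φ x = ∑ i, x i * φ (e i) := by
      intro x
      conv_lhs => rw [pi_eq_sum_univ x]
      rw [map_sum]
      exact Finset.sum_congr rfl fun i _ => by rw [map_smul, smul_eq_mul]
    set q' : Fin k → ℝ := fun i => -φ (e i) with hq'
    have hq'0 : ∀ i, 0 ≤ q' i := fun i => neg_nonneg.2 (hphie i)
    set S := ∑ i, q' i with hS
    have hS0 : 0 ≤ S := Finset.sum_nonneg fun i _ => hq'0 i
    -- vertices of the mixture simplex: g s ∈ C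
    have hgC : ∀ s : ↥N, g s ∈ C := by
      intro s₀
      refine ⟨fun s => if s = s₀ then 1 else 0,
        ⟨fun s => by dsimp only; split <;> norm_num, by simp⟩, ?_⟩
      simp [hL, ite_smul]
    have hgneg : ∀ s : ↥N, φ (g s) < 0 := fun s => lt_trans (lt_trans (h1 _ (hgC s)) h2) hv0
    have hSpos : 0 < S := by
      rcases lt_or_eq_of_le hS0 with h | h
      · exact h
      exfalso
      have hall : ∀ i, q' i = 0 := fun i =>
        (Finset.sum_eq_zero_iff_of_nonneg (fun i _ => hq'0 i)).1 h.symm i (Finset.mem_univ i)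
      have hz : ∀ i, φ (e i) = 0 := by
        intro i
        have hx := hall i
        have : -φ (e i) = 0 := hx
        linarith
      obtain ⟨s₀, hs₀⟩ := hNne
      have hneg := hgneg ⟨s₀, hs₀⟩
      rw [hphix] at hneg
      simp [hz] at hneg
    set q : Fin k → ℝ := fun i => q' i / S with hqdef
    have hqΔ : q ∈ stdSimplex ℝ (Fin k) := by
      constructor
      · intro i; exact div_nonneg (hq'0 i) hS0
      · show ∑ i, q' i / S = 1
        rw [← Finset.sum_div, ← hS, div_self (ne_of_gt hSpos)]
    obtain ⟨s, hsN, hsq⟩ := hnet q hqΔ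
    -- Hölder: ⟨f s, s - q⟩ ≤ εR
    have hhold : ∑ i, f s i * (s i - q i) ≤ ε * R :=
      stmt_10_holder hR (f s) s q (hf s hsN) hsq
    -- φ(e i) as a multiple of q i
    have hphiei : ∀ i, φ (e i) = -(q i * S) := by
      intro i
      have hx : q i * S = q' i := by
        show q' i / S * S = q' i
        field_simp
      rw [hx]
      show φ (e i) = -(-φ (e i))
      rw [neg_neg]
    -- ⟨q, g s⟩ = ⟨f s, s - q⟩ - εR
    have hqg : ∑ i, q i * (g s i) = (∑ i, f s i * (s i - q i)) - ε * R := by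
      have e1 : ∀ i, q i * (g s i)
          = q i * (∑ j, f s j * s j) - q i * f s i - q i * (ε * R) := by
        intro i; simp only [hg]; ring
      rw [Finset.sum_congr rfl fun i _ => e1 i]
      rw [Finset.sum_sub_distrib, Finset.sum_sub_distrib, ← Finset.sum_mul, ← Finset.sum_mul,
        hqΔ.2, one_mul, one_mul]
      have e2 : ∑ i, f s i * (s i - q i) = (∑ j, f s j * s j) - ∑ i, q i * f s i := by
        rw [← Finset.sum_sub_distrib]
        exact Finset.sum_congr rfl fun i _ => by ring
      rw [e2]
    -- contradiction
    have hphigs : φ (g s) < 0 := hgneg ⟨s, hsN⟩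
    rw [hphix] at hphigs
    have hcomp : ∑ i, (g s) i * φ (e i) = -(S * ((∑ i, f s i * (s i - q i)) - ε * R)) := by
      have hterm : ∀ i, (g s) i * φ (e i) = -S * (q i * g s i) := by
        intro i; rw [hphiei i]; ring
      rw [Finset.sum_congr rfl fun i _ => hterm i, ← Finset.mul_sum, hqg]; ring
    rw [hcomp] at hphigs
    nlinarith
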